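/- Commutation of element convolution with the splitting/hashing matrix: C_{n,e} · H = H · Ĉ_e, where H[A, ((π,σ), A_1,…,A_s)] := 1 if π is injective on A and σ^{-1}(i) ∩ π(A) = A_i for all i ∈ [s], else 0, and Ĉ_e is the block-diagonal matrix whose only nonzero entries are Ĉ_e[((π,σ),A_1,…,A_s), ((π,σ),A_1,…,A_{i-1}, A_i ∪ {π(e)}, A_{i+1},…,A_s)] = 1 whenever π(e) ∉ A_i, with i = σ(π(e)). -/

import Mathlib

/-- Element convolution matrix `C_{n,e}` over a semiring `S`. -/
def convC (S : Type*) [Semiring S] (n : ℕ) (e : Fin n) :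
    Matrix (Finset (Fin n)) (Finset (Fin n)) S :=
  fun A B => if e ∉ A ∧ insert e A = B then 1 else 0

/-- The splitting/hashing matrix `H`: `H[A,((π,σ),A₁,…,A_s)] = 1` iff `π` is
injective on `A` and `σ⁻¹(i) ∩ π(A) = A_i` for all `i`. -/
def Hmat (S : Type*) [Semiring S] {n u s : ℕ} {H : Type*}
    (π : H → Fin n → Fin u) (σ : H → Fin u → Fin s) :
    Matrix (Finset (Fin n)) (H × (Fin s → Finset (Fin u))) S :=
  fun A c =>
    if (∀ a ∈ A, ∀ b ∈ A, π c.1 a = π c.1 b → a = b) ∧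
       (∀ i : Fin s, (A.image (π c.1)).filter (fun v => σ c.1 v = i) = c.2 i)
    then 1 else 0

/-- The block-diagonal convolution matrix `Ĉ_e`: its only nonzero entries are at
`((π,σ),A₁,…,A_s), ((π,σ),A₁,…,A_i ∪ {π(e)},…,A_s)` with `i = σ(π(e))` and
`π(e) ∉ A_i`. -/
def Chat (S : Type*) [Semiring S] {n u s : ℕ} {H : Type*} [DecidableEq H]
    (π : H → Fin n → Fin u) (σ : H → Fin u → Fin s) (e : Fin n) :
    Matrix (H × (Fin s → Finset (Fin u))) (H × (Fin s → Finset (Fin u))) S :=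
  fun c c' =>
    if c'.1 = c.1 ∧ π c.1 e ∉ c.2 (σ c.1 (π c.1 e)) ∧
       c'.2 = Function.update c.2 (σ c.1 (π c.1 e))
               (insert (π c.1 e) (c.2 (σ c.1 (π c.1 e))))
    then 1 else 0

/-- Commutation of element convolution with the splitting/hashing matrix:
`C_{n,e} · H = H · Ĉ_e`. -/
theorem stmt15 {S : Type*} [Semiring S] {n u s : ℕ}
    {H : Type*} [Fintype H] [DecidableEq H]
    (π : H → Fin n → Fin u) (σ : H → Fin u → Fin s) (e : Fin n) :
    convC S n e * Hmat S π σ = Hmat S π σ * Chat S π σ e := by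
  ext A c
  rw [Matrix.mul_apply, Matrix.mul_apply]
  set πe := π c.1 e with hπe
  set i := σ c.1 (π c.1 e) with hi
  set c₀ : H × (Fin s → Finset (Fin u)) :=
    (c.1, Function.update c.2 i ((c.2 i).erase πe)) with hc₀
  -- Left side
  have hL : ∑ B, convC S n e A B * Hmat S π σ B c
      = if e ∈ A then 0 else Hmat S π σ (insert e A) c := by
    split_ifs with he
    · apply Finset.sum_eq_zero; intro B _; simp [convC, he]
    · rw [Finset.sum_eq_single (insert e A)]
      · simp [convC, he]
      · intro B _ hB
        have : ¬ (e ∉ A ∧ insert e A = B) := by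
          rintro ⟨-, rfl⟩; exact hB rfl
        simp [convC, this]
      · simp
  -- Right side
  have hR : ∑ c', Hmat S π σ A c' * Chat S π σ e c' c
      = if πe ∈ c.2 i then Hmat S π σ A c₀ else 0 := by
    by_cases hm : πe ∈ c.2 i
    · rw [Finset.sum_eq_single c₀, if_pos hm]
      · have hch : Chat S π σ e c₀ c = 1 := by
          rw [Chat, if_pos]
          refine ⟨rfl, ?_, ?_⟩
          · show πe ∉ Function.update c.2 i ((c.2 i).erase πe) i
            simp
          · funext j
            by_cases hj : j = i
            · subst hj
              simp +zetaDelta [Finset.insert_erase hm]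
            · simp +zetaDelta [Function.update_of_ne hj]
        rw [hch, mul_one]
      · intro c' _ hne
        have hch : Chat S π σ e c' c = 0 := by
          rw [Chat, if_neg]
          rintro ⟨h1, h2, h3⟩
          apply hne
          have hfst : c'.1 = c.1 := h1.symm
          have hkey : σ c'.1 (π c'.1 e) = i := by rw [hfst]
          rw [hkey] at h2 h3
          have hkey2 : π c'.1 e = πe := by rw [hfst]
          rw [hkey2] at h2 h3
          have hii : c.2 i = insert πe (c'.2 i) := by rw [h3]; simp
          have hsnd : c'.2 = c₀.2 := by
            funext j
            by_cases hj : j = i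
            · subst hj
              show c'.2 i = Function.update c.2 i ((c.2 i).erase πe) i
              rw [Function.update_self, hii, Finset.erase_insert h2]
            · show c'.2 j = Function.update c.2 i ((c.2 i).erase πe) j
              rw [Function.update_of_ne hj, h3, Function.update_of_ne hj]
          exact Prod.ext hfst hsnd
        rw [hch, mul_zero]
      · simp
    · rw [if_neg hm]
      apply Finset.sum_eq_zero; intro c' _
      have hch : Chat S π σ e c' c = 0 := by
        rw [Chat, if_neg]
        rintro ⟨h1, h2, h3⟩
        apply hm
        have hkey : σ c'.1 (π c'.1 e) = i := by rw [← h1]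
        have hkey2 : π c'.1 e = πe := by rw [← h1]
        rw [hkey, hkey2] at h3
        rw [h3]; simp
      rw [hch, mul_zero]
  rw [hL, hR]
  by_cases he : e ∈ A
  · rw [if_pos he]
    by_cases hm : πe ∈ c.2 i
    · rw [if_pos hm]
      rw [Hmat, if_neg]
      rintro ⟨hinj, hfil⟩
      have hfi := hfil i
      have hmem : πe ∈ (A.image (π c₀.1)).filter (fun v => σ c₀.1 v = i) := by
        refine Finset.mem_filter.2 ⟨Finset.mem_image.2 ⟨e, he, rfl⟩, rfl⟩
      rw [hfi] at hmem
      have hup : c₀.2 i = (c.2 i).erase πe := by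
        rw [hc₀]; exact Function.update_self ..
      rw [hup] at hmem
      exact (Finset.notMem_erase _ _) hmem
    · rw [if_neg hm]
  · rw [if_neg he]
    by_cases hm : πe ∈ c.2 i
    · rw [if_pos hm]
      rw [Hmat, Hmat]
      have hc₀1 : c₀.1 = c.1 := rfl
      have hupi : c₀.2 i = (c.2 i).erase πe := by
        rw [hc₀]; exact Function.update_self ..
      have hupj : ∀ j, j ≠ i → c₀.2 j = c.2 j := by
        intro j hj; rw [hc₀]; exact Function.update_of_ne hj _ _
      congr 1
      apply propext
      constructor
      · rintro ⟨hinj, hfil⟩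
        have hπA : πe ∉ A.image (π c.1) := by
          rw [Finset.mem_image]
          rintro ⟨a, ha, hae⟩
          exact he (hinj a (Finset.mem_insert_of_mem ha) e
            (Finset.mem_insert_self e A) hae ▸ ha)
        constructor
        · intro a ha b hb hab
          exact hinj a (Finset.mem_insert_of_mem ha) b (Finset.mem_insert_of_mem hb) hab
        · intro j
          have hj := hfil j
          rw [Finset.image_insert, Finset.filter_insert] at hj
          rw [hc₀1]
          by_cases hji : j = i
          · subst hji
            rw [if_pos hi.symm] at hj
            rw [hupi, ← hj, ← hπe,
              Finset.erase_insert (fun hmem => hπA (Finset.mem_filter.1 hmem).1)]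
          · have hcond : ¬ σ c.1 (π c.1 e) = j := fun h => hji (by rw [hi, h])
            rw [if_neg hcond] at hj
            rw [hupj j hji, hj]
      · rintro ⟨hinj, hfil⟩
        have hfil' : ∀ j, (A.image (π c.1)).filter (fun v => σ c.1 v = j) = c₀.2 j := by
          intro j; have := hfil j; rwa [hc₀1] at this
        have hπA : πe ∉ A.image (π c.1) := by
          intro hmem
          have : πe ∈ (A.image (π c.1)).filter (fun v => σ c.1 v = i) :=
            Finset.mem_filter.2 ⟨hmem, rfl⟩
          rw [hfil' i, hupi] at this
          exact Finset.notMem_erase _ _ this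
        constructor
        · intro a ha b hb hab
          rcases Finset.mem_insert.1 ha with ha' | ha'
          · rcases Finset.mem_insert.1 hb with hb' | hb'
            · rw [ha', hb']
            · exact absurd (Finset.mem_image.2 ⟨b, hb', by rw [← hab, ha', hπe]⟩) hπA
          · rcases Finset.mem_insert.1 hb with hb' | hb'
            · exact absurd (Finset.mem_image.2 ⟨a, ha', by rw [hab, hb', hπe]⟩) hπA
            · exact hinj a ha' b hb' hab
        · intro j
          rw [Finset.image_insert, Finset.filter_insert]
          by_cases hji : j = i
          · subst hji
            rw [if_pos hi.symm, hfil' i, hupi, ← hπe, Finset.insert_erase hm]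
          · have hcond : ¬ σ c.1 (π c.1 e) = j := fun h => hji (by rw [hi, h])
            rw [if_neg hcond, hfil' j, hupj j hji]
    · rw [if_neg hm]
      rw [Hmat, if_neg]
      rintro ⟨hinj, hfil⟩
      apply hm
      rw [← hfil i]
      exact Finset.mem_filter.2
        ⟨Finset.mem_image.2 ⟨e, Finset.mem_insert_self e A, rfl⟩, rfl⟩
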